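/- arXiv:1311.3539 — 2 statements merged into one kernel-verified Lean document; each statement's English description precedes it below -/
import Mathlib

section
/- Let G be a monotone function from sets of sentences to sets of sentences that maps consistent sets to consistent sets. If V is consistent and sound (V ⊆ G(V)), then there exists a smallest consistent fixed point of G containing V. -/
def Consistent {S : Type*} (neg : S → S) (U : Set S) : Prop :=
  ¬ ∃ A, A ∈ U ∧ neg A ∈ U

theorem smallest_consistent_fixed_point_above {S : Type*} (neg : S → S)
    (G : Set S → Set S) (hmono : Monotone G)
    (hG : ∀ U, Consistent neg U → Consistent neg (G U))
    (V : Set S) (hVcons : Consistent neg V) (hVsound : V ⊆ G V) :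
    ∃ U, Consistent neg U ∧ G U = U ∧ V ⊆ U ∧
      ∀ W, Consistent neg W → G W = W → V ⊆ W → U ⊆ W := by
  classical
  -- P : consistent, sound sets containing V
  set P : Set (Set S) := {W | Consistent neg W ∧ V ⊆ W ∧ W ⊆ G W} with hP
  have hVP : V ∈ P := ⟨hVcons, subset_rfl, hVsound⟩
  -- Zorn's lemma on P
  obtain ⟨M, hVM0, hmax⟩ := zorn_subset_nonempty P (fun c hcP hchain hcne => by
      refine ⟨⋃₀ c, ⟨?_, ?_, ?_⟩, fun s hs => Set.subset_sUnion_of_mem hs⟩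
      · rintro ⟨A, hA, hnA⟩
        obtain ⟨W1, hW1, hAW1⟩ := hA
        obtain ⟨W2, hW2, hAW2⟩ := hnA
        rcases hchain.total hW1 hW2 with h | h
        · exact (hcP hW2).1 ⟨A, h hAW1, hAW2⟩
        · exact (hcP hW1).1 ⟨A, hAW1, h hAW2⟩
      · obtain ⟨s, hs⟩ := hcne
        exact (hcP hs).2.1.trans (Set.subset_sUnion_of_mem hs)
      · rintro x ⟨W, hW, hxW⟩
        exact hmono (Set.subset_sUnion_of_mem hW) ((hcP hW).2.2 hxW)) V hVP
  obtain ⟨hMcons, hVM, hMsound⟩ := hmax.prop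
  -- M is a fixed point
  have hGM : G M = M := by
    have : G M ∈ P := ⟨hG M hMcons, hVM.trans hMsound, hmono hMsound⟩
    exact (hmax.eq_of_subset this hMsound).symm
  -- least prefixed point above V
  set U : Set S := ⋂₀ {W | V ⊆ W ∧ G W ⊆ W} with hU
  have hVU : V ⊆ U := fun x hx => fun W hW => hW.1 hx
  have hUsub : ∀ W, V ⊆ W → G W ⊆ W → U ⊆ W := fun W h1 h2 =>
    Set.sInter_subset_of_mem ⟨h1, h2⟩
  have hGUU : G U ⊆ U := by
    intro x hx W hW
    exact hW.2 (hmono (hUsub W hW.1 hW.2) hx)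
  have hUGU : U ⊆ G U := by
    have : V ⊆ G U := hVsound.trans (hmono hVU)
    exact hUsub (G U) this (hmono hGUU)
  have hfix : G U = U := Set.Subset.antisymm hGUU hUGU
  have hUM : U ⊆ M := hUsub M hVM hGM.le
  refine ⟨U, ?_, hfix, hVU, fun W hWc hWfix hVW => hUsub W hVW hWfix.le⟩
  rintro ⟨A, hA, hnA⟩
  exact hMcons ⟨A, hUM hA, hUM hnA⟩
end

section
/- Let G be a monotone function on sets of sentences preserving consistency, and let W be a consistent set. Then the equation V = W ∩ G(V) has a greatest consistent solution V, and this V is the greatest sound consistent set contained in W. -/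
theorem greatest_solution_eq_greatest_sound {S : Type*} (neg : S → S)
    (G : Set S → Set S) (hmono : Monotone G)
    (hG : ∀ U, Consistent neg U → Consistent neg (G U))
    (W : Set S) (hW : Consistent neg W) :
    ∃ V, Consistent neg V ∧ V = W ∩ G V ∧
      (∀ V', Consistent neg V' → V' = W ∩ G V' → V' ⊆ V) ∧
      (V ⊆ G V ∧ V ⊆ W ∧
        ∀ V', Consistent neg V' → V' ⊆ G V' → V' ⊆ W → V' ⊆ V) := by
  set V : Set S := ⋃₀ {U | U ⊆ G U ∧ U ⊆ W} with hV
  have hVW : V ⊆ W := by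
    intro x hx
    obtain ⟨U, ⟨_, hUW⟩, hxU⟩ := hx
    exact hUW hxU
  have hcons : Consistent neg V := fun ⟨A, h1, h2⟩ => hW ⟨A, hVW h1, hVW h2⟩
  have hsound : V ⊆ G V := by
    intro x hx
    obtain ⟨U, ⟨hUG, hUW⟩, hxU⟩ := hx
    exact hmono (Set.subset_sUnion_of_mem (Set.mem_setOf.2 ⟨hUG, hUW⟩)) (hUG hxU)
  have hmax : ∀ V', V' ⊆ G V' → V' ⊆ W → V' ⊆ V :=
    fun V' h1 h2 => Set.subset_sUnion_of_mem (Set.mem_setOf.2 ⟨h1, h2⟩)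
  have hfix : V = W ∩ G V := by
    apply subset_antisymm (Set.subset_inter hVW hsound)
    apply hmax
    · exact le_trans Set.inter_subset_right (hmono (Set.subset_inter hVW hsound))
    · exact Set.inter_subset_left
  refine ⟨V, hcons, hfix, ?_, hsound, hVW, fun V' _ h1 h2 => hmax V' h1 h2⟩
  intro V' _ hV'
  apply hmax
  · rw [hV']
    exact le_trans Set.inter_subset_right (hmono (le_of_eq hV'))
  · rw [hV']; exact Set.inter_subset_left
end
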